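/- Let ξ̂ = ξ − (1/|K|)∫_K ξ dx and η̂ = η − (1/|K|)∫_K η dx on the quadrilateral K of the standard setup. Then ∫_K ξ̂² dx = (4/9)(3 + 3α² − β²)(r × s), ∫_K ξ̂ η̂ dx = (8/9) αβ (r × s), and ∫_K η̂² dx = (4/9)(3 + 3β² − α²)(r × s). -/

import Mathlib

open MeasureTheory

/-- The planar cross product `r × s = r₁s₂ - r₂s₁`. -/
def cross2 (u v : ℝ × ℝ) : ℝ := u.1 * v.2 - u.2 * v.1

/-- The convex quadrilateral with vertices
`A1 = (1+α)r + (1+β)s`, `A2 = -(1+α)r + (1-β)s`,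
`A3 = (-1+α)r + (-1+β)s`, `A4 = (1-α)r - (1+β)s`. -/
def quadK (α β : ℝ) (r s : ℝ × ℝ) : Set (ℝ × ℝ) :=
  convexHull ℝ {(1 + α) • r + (1 + β) • s, (-(1 + α)) • r + (1 - β) • s,
    (-1 + α) • r + (-1 + β) • s, (1 - α) • r + (-(1 + β)) • s}

/-- The linear coordinate `ξ` defined by `ξ(a r + b s) = a`. -/
noncomputable def xiCoord (r s : ℝ × ℝ) (x : ℝ × ℝ) : ℝ := cross2 x s / cross2 r s

/-- The linear coordinate `η` defined by `η(a r + b s) = b`. -/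
noncomputable def etaCoord (r s : ℝ × ℝ) (x : ℝ × ℝ) : ℝ := cross2 r x / cross2 r s

lemma integral_poly3 (d0 d1 d2 d3 a b : ℝ) :
    ∫ x in a..b, (d0 + d1*x + d2*x^2 + d3*x^3) =
      (d0*b + d1*b^2/2 + d2*b^3/3 + d3*b^4/4) - (d0*a + d1*a^2/2 + d2*a^3/3 + d3*a^4/4) := by
  have h : ∀ x ∈ Set.uIcc a b, HasDerivAt
      (fun x => d0*x + d1*x^2/2 + d2*x^3/3 + d3*x^4/4) (d0 + d1*x + d2*x^2 + d3*x^3) x := by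
    intro x _
    have h1 : HasDerivAt (fun x : ℝ => d0*x + d1*x^2/2 + d2*x^3/3 + d3*x^4/4)
        (d0*1 + d1*(2*x^1)/2 + d2*(3*x^2)/3 + d3*(4*x^3)/4) x := by
      exact ((((hasDerivAt_id x).const_mul d0).add
        (((hasDerivAt_pow 2 x).const_mul d1).div_const 2)).add
        (((hasDerivAt_pow 3 x).const_mul d2).div_const 3)).add
        (((hasDerivAt_pow 4 x).const_mul d3).div_const 4)
    convert h1 using 1; ring
  rw [intervalIntegral.integral_eq_sub_of_hasDerivAt h (Continuous.intervalIntegrable (by continuity) a b)]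

def sim2 : Set (ℝ × ℝ) := {p | 0 ≤ p.1 ∧ 0 ≤ p.2 ∧ p.1 + p.2 ≤ 1}

lemma sim2_convex : Convex ℝ sim2 := by
  have : sim2 = {p : ℝ×ℝ | 0 ≤ p.1} ∩ ({p : ℝ×ℝ | 0 ≤ p.2} ∩ {p : ℝ×ℝ | p.1 + p.2 ≤ 1}) := by
    ext p; simp [sim2, and_assoc]
  rw [this]
  exact (convex_halfSpace_ge (LinearMap.isLinear (LinearMap.fst ℝ ℝ ℝ)) 0).inter
    ((convex_halfSpace_ge (LinearMap.isLinear (LinearMap.snd ℝ ℝ ℝ)) 0).inter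
     (convex_halfSpace_le (LinearMap.isLinear (LinearMap.fst ℝ ℝ ℝ + LinearMap.snd ℝ ℝ ℝ)) 1))

lemma sim2_eq_hull : convexHull ℝ {((0:ℝ),(0:ℝ)), ((1:ℝ),(0:ℝ)), ((0:ℝ),(1:ℝ))} = sim2 := by
  apply le_antisymm
  · apply convexHull_min _ sim2_convex
    intro p hp
    simp only [Set.mem_insert_iff, Set.mem_singleton_iff] at hp
    rcases hp with h|h|h <;> subst h <;> simp [sim2]
  · rintro ⟨x, y⟩ ⟨hx, hy, hxy⟩
    by_cases h0 : x + y = 0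
    · have hx0 : x = 0 := by linarith
      have hy0 : y = 0 := by linarith
      subst hx0; subst hy0
      exact subset_convexHull ℝ _ (by simp)
    · have hpos : 0 < x + y := lt_of_le_of_ne (by linarith) (Ne.symm h0)
      have hw : ((x/(x+y), y/(x+y)) : ℝ×ℝ) ∈ segment ℝ ((1:ℝ),(0:ℝ)) ((0:ℝ),(1:ℝ)) := by
        refine ⟨x/(x+y), y/(x+y), by positivity, by positivity, by field_simp, ?_⟩
        simp [Prod.ext_iff]
      have hwm : ((x/(x+y), y/(x+y)) : ℝ×ℝ) ∈ convexHull ℝ {((0:ℝ),(0:ℝ)), ((1:ℝ),(0:ℝ)), ((0:ℝ),(1:ℝ))} := by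
        apply segment_subset_convexHull (by simp) (by simp) hw
      have h0m : ((0:ℝ),(0:ℝ)) ∈ convexHull ℝ {((0:ℝ),(0:ℝ)), ((1:ℝ),(0:ℝ)), ((0:ℝ),(1:ℝ))} :=
        subset_convexHull ℝ _ (by simp)
      have hseg : ((x,y) : ℝ×ℝ) ∈ segment ℝ ((0:ℝ),(0:ℝ)) ((x/(x+y), y/(x+y)) : ℝ×ℝ) := by
        refine ⟨1 - (x+y), x+y, by linarith, by linarith, by ring, ?_⟩
        simp [Prod.ext_iff]
        constructor <;> field_simp
      exact (convex_convexHull ℝ _).segment_subset h0m hwm hseg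

lemma img_lemma (m11 m12 m21 m22 w1 w2 : ℝ) (hD : m11*m22 - m12*m21 ≠ 0)
    {s : Set (ℝ×ℝ)} (hs : MeasurableSet s) (g : ℝ×ℝ → ℝ) :
    ∫ x in (fun t : ℝ×ℝ => (w1 + m11*t.1 + m12*t.2, w2 + m21*t.1 + m22*t.2)) '' s, g x
      = |m11*m22 - m12*m21| * ∫ t in s, g (w1 + m11*t.1 + m12*t.2, w2 + m21*t.1 + m22*t.2) := by
  set L : (ℝ×ℝ) →ₗ[ℝ] (ℝ×ℝ) :=
    Matrix.toLin (Module.Basis.finTwoProd ℝ) (Module.Basis.finTwoProd ℝ) !![m11, m12; m21, m22] with hL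
  have hLapp : ∀ t : ℝ×ℝ, L t = (m11*t.1 + m12*t.2, m21*t.1 + m22*t.2) := by
    intro t; rw [hL, Matrix.toLin_finTwoProd_apply]
  set Lc : (ℝ×ℝ) →L[ℝ] (ℝ×ℝ) := LinearMap.toContinuousLinearMap L with hLc
  have hdet : Lc.det = m11*m22 - m12*m21 := by
    have : (Lc : (ℝ×ℝ) →ₗ[ℝ] (ℝ×ℝ)) = L := rfl
    rw [ContinuousLinearMap.det, this, hL, LinearMap.det_toLin, Matrix.det_fin_two_of]
  have hfun : (fun t : ℝ×ℝ => ((w1 + m11*t.1 + m12*t.2, w2 + m21*t.1 + m22*t.2) : ℝ×ℝ))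
      = fun t => (w1, w2) + Lc t := by
    funext t
    have : Lc t = L t := rfl
    rw [this, hLapp]
    simp [Prod.ext_iff]; constructor <;> ring
  have hderiv : ∀ x ∈ s, HasFDerivWithinAt
      (fun t : ℝ×ℝ => ((w1 + m11*t.1 + m12*t.2, w2 + m21*t.1 + m22*t.2) : ℝ×ℝ)) Lc s x := by
    intro x _
    rw [hfun]
    exact ((Lc.hasFDerivAt.const_add _)).hasFDerivWithinAt
  have hinj : Set.InjOn (fun t : ℝ×ℝ => ((w1 + m11*t.1 + m12*t.2, w2 + m21*t.1 + m22*t.2) : ℝ×ℝ)) s := by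
    intro a _ b _ hab
    simp only [Prod.ext_iff] at hab
    obtain ⟨h1, h2⟩ := hab
    have e1 : (m11*m22 - m12*m21) * a.1 = (m11*m22 - m12*m21) * b.1 := by linear_combination m22*h1 - m12*h2
    have e2 : (m11*m22 - m12*m21) * a.2 = (m11*m22 - m12*m21) * b.2 := by linear_combination m11*h2 - m21*h1
    exact Prod.ext (mul_left_cancel₀ hD e1) (mul_left_cancel₀ hD e2)
  rw [integral_image_eq_integral_abs_det_fderiv_smul volume hs hderiv hinj g]
  simp_rw [hdet, smul_eq_mul]
  rw [MeasureTheory.integral_const_mul]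

lemma triangle_eq (p q r : ℝ×ℝ) :
    convexHull ℝ {p, q, r}
      = (fun t : ℝ×ℝ => ((p.1 + (q.1-p.1)*t.1 + (r.1-p.1)*t.2, p.2 + (q.2-p.2)*t.1 + (r.2-p.2)*t.2) : ℝ×ℝ)) '' sim2 := by
  set L : (ℝ×ℝ) →ₗ[ℝ] (ℝ×ℝ) :=
    Matrix.toLin (Module.Basis.finTwoProd ℝ) (Module.Basis.finTwoProd ℝ) !![q.1-p.1, r.1-p.1; q.2-p.2, r.2-p.2] with hL
  set A : (ℝ×ℝ) →ᵃ[ℝ] (ℝ×ℝ) := AffineMap.mk'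
    (fun t : ℝ×ℝ => ((p.1 + (q.1-p.1)*t.1 + (r.1-p.1)*t.2, p.2 + (q.2-p.2)*t.1 + (r.2-p.2)*t.2) : ℝ×ℝ))
    L ((0:ℝ),(0:ℝ)) (by
      intro t
      rw [hL, Matrix.toLin_finTwoProd_apply]
      simp [Prod.ext_iff]; constructor <;> ring) with hA
  have hcoe : ⇑A = (fun t : ℝ×ℝ => ((p.1 + (q.1-p.1)*t.1 + (r.1-p.1)*t.2, p.2 + (q.2-p.2)*t.1 + (r.2-p.2)*t.2) : ℝ×ℝ)) := by
    rw [hA]; exact AffineMap.coe_mk' _ _ _ _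
  rw [← hcoe, ← sim2_eq_hull, AffineMap.image_convexHull]
  congr 1
  rw [Set.image_insert_eq, Set.image_insert_eq, Set.image_singleton, hcoe]
  norm_num

lemma sim2_compact : IsCompact sim2 := by
  rw [← sim2_eq_hull]
  exact (((Set.finite_singleton _).insert _).insert _).isCompact_convexHull ℝ

lemma tri_int (p q r : ℝ×ℝ) (hD : (q.1-p.1)*(r.2-p.2) - (r.1-p.1)*(q.2-p.2) ≠ 0) (g : ℝ×ℝ → ℝ) :
    ∫ x in convexHull ℝ {p, q, r}, g x
      = |(q.1-p.1)*(r.2-p.2) - (r.1-p.1)*(q.2-p.2)| *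
        ∫ t in sim2, g (p.1 + (q.1-p.1)*t.1 + (r.1-p.1)*t.2, p.2 + (q.2-p.2)*t.1 + (r.2-p.2)*t.2) := by
  rw [triangle_eq p q r]
  exact img_lemma _ _ _ _ _ _ hD sim2_compact.isClosed.measurableSet g

lemma simpint (c00 c10 c01 c20 c11 c02 : ℝ) :
    ∫ p in sim2, (c00 + c10*p.1 + c01*p.2 + c20*p.1^2 + c11*p.1*p.2 + c02*p.2^2) =
      c00/2 + c10/6 + c01/6 + c20/12 + c11/24 + c02/12 := by
  have hcont : Continuous (fun p : ℝ×ℝ => c00 + c10*p.1 + c01*p.2 + c20*p.1^2 + c11*p.1*p.2 + c02*p.2^2) := by fun_prop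
  have hmeas : MeasurableSet sim2 := sim2_compact.isClosed.measurableSet
  have hint : IntegrableOn (fun p : ℝ×ℝ => c00 + c10*p.1 + c01*p.2 + c20*p.1^2 + c11*p.1*p.2 + c02*p.2^2) sim2 :=
    hcont.continuousOn.integrableOn_compact sim2_compact
  rw [← MeasureTheory.integral_indicator hmeas]
  rw [show (volume : Measure (ℝ×ℝ)) = (volume : Measure ℝ).prod volume from Measure.volume_eq_prod ℝ ℝ]
  rw [MeasureTheory.integral_prod _ (by
    rw [← Measure.volume_eq_prod]
    exact (integrable_indicator_iff hmeas).2 hint)]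
  have key : ∀ u : ℝ, (∫ v : ℝ, (sim2.indicator (fun p : ℝ×ℝ => c00 + c10*p.1 + c01*p.2 + c20*p.1^2 + c11*p.1*p.2 + c02*p.2^2)) (u, v))
      = Set.indicator (Set.Icc (0:ℝ) 1)
        (fun u => (c00+c10*u+c20*u^2)*(1-u) + (c01+c11*u)*(1-u)^2/2 + c02*(1-u)^3/3) u := by
    intro u
    by_cases hu : u ∈ Set.Icc (0:ℝ) 1
    · rw [Set.indicator_of_mem hu]
      have hvv : ∀ v : ℝ, (sim2.indicator (fun p : ℝ×ℝ => c00 + c10*p.1 + c01*p.2 + c20*p.1^2 + c11*p.1*p.2 + c02*p.2^2)) (u, v)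
          = (Set.Icc (0:ℝ) (1-u)).indicator (fun v => c00 + c10*u + c01*v + c20*u^2 + c11*u*v + c02*v^2) v := by
        intro v
        by_cases hv : v ∈ Set.Icc (0:ℝ) (1-u)
        · rw [Set.indicator_of_mem hv, Set.indicator_of_mem]
          exact ⟨hu.1, hv.1, by have := hv.2; simp only; linarith⟩
        · rw [Set.indicator_of_notMem hv, Set.indicator_of_notMem]
          intro hm
          exact hv ⟨hm.2.1, by have := hm.2.2; simp only at this ⊢; linarith⟩
      simp_rw [hvv]
      rw [MeasureTheory.integral_indicator measurableSet_Icc,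
        MeasureTheory.integral_Icc_eq_integral_Ioc,
        ← intervalIntegral.integral_of_le (by have := hu.2; linarith)]
      rw [show (fun v => c00 + c10*u + c01*v + c20*u^2 + c11*u*v + c02*v^2)
          = (fun v => (c00+c10*u+c20*u^2) + (c01+c11*u)*v + c02*v^2 + 0*v^3) from funext fun v => by ring]
      rw [integral_poly3]; ring
    · rw [Set.indicator_of_notMem hu]
      have hvv : ∀ v : ℝ, (sim2.indicator (fun p : ℝ×ℝ => c00 + c10*p.1 + c01*p.2 + c20*p.1^2 + c11*p.1*p.2 + c02*p.2^2)) (u, v) = 0 := by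
        intro v
        apply Set.indicator_of_notMem
        intro hm
        rcases hm with ⟨h1, h2, h3⟩
        simp only at h1 h2 h3
        simp only [Set.mem_Icc, not_and_or, not_le] at hu
        rcases hu with h|h <;> linarith
      simp_rw [hvv]
      exact integral_zero ℝ ℝ
  simp_rw [key]
  rw [MeasureTheory.integral_indicator measurableSet_Icc,
    MeasureTheory.integral_Icc_eq_integral_Ioc,
    ← intervalIntegral.integral_of_le (by norm_num : (0:ℝ) ≤ 1)]
  rw [show (fun u : ℝ => (c00+c10*u+c20*u^2)*(1-u) + (c01+c11*u)*(1-u)^2/2 + c02*(1-u)^3/3)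
      = (fun u : ℝ => (c00 + c01/2 + c02/3) + (c10 - c00 + (c11 - 2*c01)/2 - c02)*u
          + (c20 - c10 + (c01 - 2*c11)/2 + c02)*u^2 + (-c20 + c11/2 - c02/3)*u^3) from funext fun u => by ring]
  rw [integral_poly3]; ring

lemma quad_decomp (α β : ℝ) (h1 : α + β < 1) (h2 : α - β < 1) (h3 : β - α < 1) (h4 : -α - β < 1) :
    convexHull ℝ {((1+α,1+β):ℝ×ℝ), (-1-α,1-β), (-1+α,-1+β), (1-α,-1-β)} =
      convexHull ℝ {((1+α,1+β):ℝ×ℝ), (-1-α,1-β), (-1+α,-1+β)} ∪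
      convexHull ℝ {((1+α,1+β):ℝ×ℝ), (-1+α,-1+β), (1-α,-1-β)} := by
  have ha : (0:ℝ) < 1 + α - β := by linarith
  have hb : (0:ℝ) < 1 + β - α := by linarith
  apply le_antisymm
  · intro z hz
    have hset : ({((1+α,1+β):ℝ×ℝ), (-1-α,1-β), (-1+α,-1+β), (1-α,-1-β)} : Set (ℝ×ℝ))
        = insert ((-1-α,1-β):ℝ×ℝ) {((1+α,1+β):ℝ×ℝ), (-1+α,-1+β), (1-α,-1-β)} := by
      ext w; simp only [Set.mem_insert_iff, Set.mem_singleton_iff]; tauto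
    rw [hset, convexHull_insert ⟨_, Set.mem_insert _ _⟩, mem_convexJoin] at hz
    obtain ⟨x, hx, q, hq, hseg⟩ := hz
    rw [Set.mem_singleton_iff] at hx
    subst hx
    rw [triangle_eq] at hq
    obtain ⟨⟨u, v⟩, ⟨hu, hv, huv⟩, hqe⟩ := hq
    simp only at hu hv huv hqe
    obtain ⟨t1, t, ht1, ht, hsum, hze⟩ := hseg
    have ht1e : t1 = 1 - t := by linarith
    subst ht1e
    have htle : t ≤ 1 := by linarith
    have hq1 : q.1 = (1+α) + (-2)*u + (-2*α)*v := by rw [← hqe]; dsimp only; ring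
    have hq2 : q.2 = (1+β) + (-2)*u + (-2-2*β)*v := by rw [← hqe]; dsimp only; ring
    have hz1 : z.1 = (1-t) * (-1-α) + t * ((1+α) + (-2)*u + (-2*α)*v) := by
      rw [← hze, ← hq1]; simp [Prod.fst_add, Prod.smul_fst]; try ring
    have hz2 : z.2 = (1-t) * (1-β) + t * ((1+β) + (-2)*u + (-2-2*β)*v) := by
      rw [← hze, ← hq2]; simp [Prod.snd_add, Prod.smul_snd]; try ring
    have hkey : z.2 - z.1 - (β - α) = 2*((1-t)*(1+α-β) - t*v*(1+β-α)) := by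
      rw [hz1, hz2]; ring
    by_cases hell : 0 ≤ z.2 - z.1 - (β - α)
    · left
      rw [triangle_eq]
      have hl : t*v*(1+β-α) ≤ (1-t)*(1+α-β) := by
        rw [hkey] at hell; linarith
      refine ⟨((1-t) - t*v*(1+β-α)/(1+α-β), t*u + t*v*(1+α+β)/(1+α-β)), ⟨?_, ?_, ?_⟩, ?_⟩
      · dsimp only
        rw [sub_nonneg, div_le_iff₀ ha]
        linarith
      · dsimp only
        exact add_nonneg (mul_nonneg ht hu)
          (div_nonneg (by nlinarith [mul_nonneg ht hv]) (le_of_lt ha))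
      · dsimp only
        rw [show (1-t) - t*v*(1+β-α)/(1+α-β) + (t*u + t*v*(1+α+β)/(1+α-β))
            = ((1-t)*(1+α-β) - t*v*(1+β-α) + t*u*(1+α-β) + t*v*(1+α+β))/(1+α-β) from by
          field_simp; ring, div_le_one ha]
        nlinarith [mul_nonneg (mul_nonneg ht (by linarith : (0:ℝ) ≤ 1 - u - v)) (le_of_lt ha),
          mul_nonneg (mul_nonneg ht hv) (by linarith : (0:ℝ) ≤ 1 - α - β)]
      · dsimp only
        rw [Prod.ext_iff]
        constructor
        · dsimp only; rw [hz1]; field_simp; ring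
        · dsimp only; rw [hz2]; field_simp; ring
    · right
      rw [triangle_eq]
      have hl : (1-t)*(1+α-β) ≤ t*v*(1+β-α) := by
        rw [hkey] at hell; push_neg at hell; linarith
      refine ⟨(t*u + (1-t)*(1+α+β)/(1+β-α), t*v - (1-t)*(1+α-β)/(1+β-α)), ⟨?_, ?_, ?_⟩, ?_⟩
      · dsimp only
        exact add_nonneg (mul_nonneg ht hu)
          (div_nonneg (by nlinarith) (le_of_lt hb))
      · dsimp only
        rw [sub_nonneg, div_le_iff₀ hb]
        linarith
      · dsimp only
        rw [show t*u + (1-t)*(1+α+β)/(1+β-α) + (t*v - (1-t)*(1+α-β)/(1+β-α))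
            = (t*u*(1+β-α) + t*v*(1+β-α) + (1-t)*(1+α+β) - (1-t)*(1+α-β))/(1+β-α) from by
          field_simp; ring, div_le_one hb]
        nlinarith [mul_nonneg (mul_nonneg ht (by linarith : (0:ℝ) ≤ 1 - u - v)) (le_of_lt hb),
          mul_nonneg (by linarith : (0:ℝ) ≤ 1 - t) (by linarith : (0:ℝ) ≤ 1 - α - β)]
      · dsimp only
        rw [Prod.ext_iff]
        constructor
        · dsimp only; rw [hz1]; field_simp; ring
        · dsimp only; rw [hz2]; field_simp; ring
  · apply Set.union_subset <;> apply convexHull_mono <;> intro w hw <;>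
      simp only [Set.mem_insert_iff, Set.mem_singleton_iff] at hw ⊢ <;> tauto

lemma tri_quad (p q r : ℝ×ℝ) (hD : 0 < (q.1-p.1)*(r.2-p.2) - (r.1-p.1)*(q.2-p.2))
    (c00 c10 c01 c20 c11 c02 : ℝ) :
    ∫ x in convexHull ℝ {p, q, r},
        (c00 + c10*x.1 + c01*x.2 + c20*x.1^2 + c11*x.1*x.2 + c02*x.2^2)
      = ((q.1-p.1)*(r.2-p.2) - (r.1-p.1)*(q.2-p.2)) *
        ((c00 + c10*p.1 + c01*p.2 + c20*p.1^2 + c11*(p.1*p.2) + c02*p.2^2)/2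
        + (c10*(q.1-p.1) + c01*(q.2-p.2) + 2*c20*(p.1*(q.1-p.1)) + c11*(p.1*(q.2-p.2) + p.2*(q.1-p.1)) + 2*c02*(p.2*(q.2-p.2)))/6
        + (c10*(r.1-p.1) + c01*(r.2-p.2) + 2*c20*(p.1*(r.1-p.1)) + c11*(p.1*(r.2-p.2) + p.2*(r.1-p.1)) + 2*c02*(p.2*(r.2-p.2)))/6
        + (c20*(q.1-p.1)^2 + c11*((q.1-p.1)*(q.2-p.2)) + c02*(q.2-p.2)^2)/12
        + (2*c20*((q.1-p.1)*(r.1-p.1)) + c11*((q.1-p.1)*(r.2-p.2) + (q.2-p.2)*(r.1-p.1)) + 2*c02*((q.2-p.2)*(r.2-p.2)))/24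
        + (c20*(r.1-p.1)^2 + c11*((r.1-p.1)*(r.2-p.2)) + c02*(r.2-p.2)^2)/12) := by
  rw [tri_int p q r (ne_of_gt hD) _]
  rw [abs_of_pos hD]
  congr 1
  rw [show (fun t : ℝ×ℝ => c00 + c10*(p.1 + (q.1-p.1)*t.1 + (r.1-p.1)*t.2)
        + c01*(p.2 + (q.2-p.2)*t.1 + (r.2-p.2)*t.2)
        + c20*(p.1 + (q.1-p.1)*t.1 + (r.1-p.1)*t.2)^2
        + c11*(p.1 + (q.1-p.1)*t.1 + (r.1-p.1)*t.2)*(p.2 + (q.2-p.2)*t.1 + (r.2-p.2)*t.2)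
        + c02*(p.2 + (q.2-p.2)*t.1 + (r.2-p.2)*t.2)^2)
      = (fun t : ℝ×ℝ =>
        (c00 + c10*p.1 + c01*p.2 + c20*p.1^2 + c11*(p.1*p.2) + c02*p.2^2)
        + (c10*(q.1-p.1) + c01*(q.2-p.2) + 2*c20*(p.1*(q.1-p.1)) + c11*(p.1*(q.2-p.2) + p.2*(q.1-p.1)) + 2*c02*(p.2*(q.2-p.2)))*t.1
        + (c10*(r.1-p.1) + c01*(r.2-p.2) + 2*c20*(p.1*(r.1-p.1)) + c11*(p.1*(r.2-p.2) + p.2*(r.1-p.1)) + 2*c02*(p.2*(r.2-p.2)))*t.2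
        + (c20*(q.1-p.1)^2 + c11*((q.1-p.1)*(q.2-p.2)) + c02*(q.2-p.2)^2)*t.1^2
        + (2*c20*((q.1-p.1)*(r.1-p.1)) + c11*((q.1-p.1)*(r.2-p.2) + (q.2-p.2)*(r.1-p.1)) + 2*c02*((q.2-p.2)*(r.2-p.2)))*t.1*t.2
        + (c20*(r.1-p.1)^2 + c11*((r.1-p.1)*(r.2-p.2)) + c02*(r.2-p.2)^2)*t.2^2) from funext fun t => by ring]
  rw [simpint]

lemma line_null (c : ℝ) : volume {p : ℝ×ℝ | p.2 - p.1 = c} = 0 := by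
  have hm : MeasurableSet {p : ℝ×ℝ | p.2 - p.1 = c} := by
    have : Continuous fun p : ℝ×ℝ => p.2 - p.1 := by fun_prop
    exact this.measurable (measurableSet_singleton c)
  rw [show (volume : Measure (ℝ×ℝ)) = (volume : Measure ℝ).prod volume from Measure.volume_eq_prod ℝ ℝ,
    Measure.measure_prod_null hm]
  filter_upwards with x
  have : (Prod.mk x ⁻¹' {p : ℝ×ℝ | p.2 - p.1 = c}) = {c + x} := by
    ext y; simp only [Set.mem_preimage, Set.mem_setOf_eq, Set.mem_singleton_iff]
    constructor <;> intro h <;> linarith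
  rw [this]; exact measure_singleton _

lemma master (α β : ℝ) (h1 : α + β < 1) (h2 : α - β < 1) (h3 : β - α < 1) (h4 : -α - β < 1)
    (c00 c10 c01 c20 c11 c02 : ℝ) :
    ∫ p in convexHull ℝ {((1+α,1+β):ℝ×ℝ), (-1-α,1-β), (-1+α,-1+β), (1-α,-1-β)},
        (c00 + c10*p.1 + c01*p.2 + c20*p.1^2 + c11*p.1*p.2 + c02*p.2^2)
      = c00*4 + c10*(4*β/3) + c01*(4*α/3) + c20*(4*(1+α^2)/3) + c11*(4*(α*β)/3) + c02*(4*(1+β^2)/3) := by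
  have ha : (0:ℝ) < 1 + α - β := by linarith
  have hb : (0:ℝ) < 1 + β - α := by linarith
  have hfin3 : ∀ a b c : ℝ×ℝ, IsCompact (convexHull ℝ ({a, b, c} : Set (ℝ×ℝ))) := fun a b c =>
    ((Set.finite_singleton c).insert b |>.insert a).isCompact_convexHull ℝ
  have hcont : Continuous (fun p : ℝ×ℝ => c00 + c10*p.1 + c01*p.2 + c20*p.1^2 + c11*p.1*p.2 + c02*p.2^2) := by
    fun_prop
  have hup_le : ∀ z ∈ convexHull ℝ {((1+α,1+β):ℝ×ℝ), (-1-α,1-β), (-1+α,-1+β)}, β - α ≤ z.2 - z.1 := by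
    rw [triangle_eq]
    rintro z ⟨⟨u,v⟩, ⟨hu,hv,huv⟩, rfl⟩
    dsimp only
    nlinarith [mul_nonneg hu (le_of_lt ha)]
  have hdn_le : ∀ z ∈ convexHull ℝ {((1+α,1+β):ℝ×ℝ), (-1+α,-1+β), (1-α,-1-β)}, z.2 - z.1 ≤ β - α := by
    rw [triangle_eq]
    rintro z ⟨⟨u,v⟩, ⟨hu,hv,huv⟩, rfl⟩
    dsimp only
    nlinarith [mul_nonneg hv (le_of_lt hb)]
  have hdisj : AEDisjoint volume
      (convexHull ℝ {((1+α,1+β):ℝ×ℝ), (-1-α,1-β), (-1+α,-1+β)})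
      (convexHull ℝ {((1+α,1+β):ℝ×ℝ), (-1+α,-1+β), (1-α,-1-β)}) := by
    refine measure_mono_null ?_ (line_null (β - α))
    rintro z ⟨hz1, hz2⟩
    exact le_antisymm (hdn_le z hz2) (hup_le z hz1)
  rw [quad_decomp α β h1 h2 h3 h4,
    integral_union_ae hdisj ((hfin3 _ _ _).isClosed.measurableSet.nullMeasurableSet)
      (hcont.continuousOn.integrableOn_compact (hfin3 _ _ _))
      (hcont.continuousOn.integrableOn_compact (hfin3 _ _ _)),
    tri_quad _ _ _ (by dsimp only; ring_nf; linarith) c00 c10 c01 c20 c11 c02,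
    tri_quad _ _ _ (by dsimp only; ring_nf; linarith) c00 c10 c01 c20 c11 c02]
  dsimp only
  ring

/-- The mean-zero modifications `ξ̂ = ξ - (1/|K|)∫_K ξ`,
`η̂ = η - (1/|K|)∫_K η` satisfy
`∫_K ξ̂² = (4/9)(3+3α²-β²)(r×s)`, `∫_K ξ̂η̂ = (8/9)αβ(r×s)`,
`∫_K η̂² = (4/9)(3+3β²-α²)(r×s)`. -/
theorem stmt_7 (α β : ℝ) (r s : ℝ × ℝ) (hc : 0 < cross2 r s) (hconv : |α| + |β| < 1)
    (hatXi hatEta : ℝ × ℝ → ℝ)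
    (hXi : ∀ x, hatXi x = xiCoord r s x -
      (∫ y in quadK α β r s, xiCoord r s y) / (volume (quadK α β r s)).toReal)
    (hEta : ∀ x, hatEta x = etaCoord r s x -
      (∫ y in quadK α β r s, etaCoord r s y) / (volume (quadK α β r s)).toReal) :
    (∫ x in quadK α β r s, (hatXi x) ^ 2) = 4 / 9 * (3 + 3 * α ^ 2 - β ^ 2) * cross2 r s ∧
    (∫ x in quadK α β r s, hatXi x * hatEta x) = 8 / 9 * (α * β) * cross2 r s ∧
    (∫ x in quadK α β r s, (hatEta x) ^ 2) = 4 / 9 * (3 + 3 * β ^ 2 - α ^ 2) * cross2 r s := by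
  have hα1 := le_abs_self α
  have hα2 := neg_abs_le α
  have hβ1 := le_abs_self β
  have hβ2 := neg_abs_le β
  have h1 : α + β < 1 := by linarith
  have h2 : α - β < 1 := by linarith
  have h3 : β - α < 1 := by linarith
  have h4 : -α - β < 1 := by linarith
  have hc0 : cross2 r s ≠ 0 := ne_of_gt hc
  have hc0' : r.1*s.2 - r.2*s.1 ≠ 0 := by unfold cross2 at hc0; exact hc0
  set K0 : Set (ℝ×ℝ) :=
    convexHull ℝ {((1+α,1+β):ℝ×ℝ), (-1-α,1-β), (-1+α,-1+β), (1-α,-1-β)} with hK0def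
  have hK0m : MeasurableSet K0 := by
    rw [hK0def]
    exact (((((Set.finite_singleton _).insert _).insert _).insert _).isCompact_convexHull ℝ).isClosed.measurableSet
  -- the image identification
  have himg : quadK α β r s = (fun t : ℝ×ℝ => ((r.1*t.1 + s.1*t.2, r.2*t.1 + s.2*t.2) : ℝ×ℝ)) '' K0 := by
    set L := Matrix.toLin (Module.Basis.finTwoProd ℝ) (Module.Basis.finTwoProd ℝ) !![r.1, s.1; r.2, s.2] with hLdef
    have hfL : (fun t : ℝ×ℝ => ((r.1*t.1 + s.1*t.2, r.2*t.1 + s.2*t.2) : ℝ×ℝ)) = ⇑L := by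
      funext t; rw [hLdef, Matrix.toLin_finTwoProd_apply]
    have e : ∀ a b : ℝ, L ((a,b) : ℝ×ℝ) = ((r.1*a + s.1*b, r.2*a + s.2*b) : ℝ×ℝ) := by
      intro a b; rw [hLdef, Matrix.toLin_finTwoProd_apply]
    rw [hfL, hK0def, LinearMap.image_convexHull]
    unfold quadK
    congr 1
    rw [Set.image_insert_eq, Set.image_insert_eq, Set.image_insert_eq, Set.image_singleton]
    rw [e, e, e, e]
    have eq1 : (1 + α) • r + (1 + β) • s = ((r.1*(1+α) + s.1*(1+β), r.2*(1+α) + s.2*(1+β)) : ℝ×ℝ) := by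
      apply Prod.ext <;> simp [Prod.fst_add, Prod.snd_add, Prod.smul_fst, Prod.smul_snd] <;> ring
    have eq2 : (-(1 + α)) • r + (1 - β) • s = ((r.1*(-1-α) + s.1*(1-β), r.2*(-1-α) + s.2*(1-β)) : ℝ×ℝ) := by
      apply Prod.ext <;> simp [Prod.fst_add, Prod.snd_add, Prod.smul_fst, Prod.smul_snd] <;> ring
    have eq3 : (-1 + α) • r + (-1 + β) • s = ((r.1*(-1+α) + s.1*(-1+β), r.2*(-1+α) + s.2*(-1+β)) : ℝ×ℝ) := by
      apply Prod.ext <;> simp [Prod.fst_add, Prod.snd_add, Prod.smul_fst, Prod.smul_snd] <;> ring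
    have eq4 : (1 - α) • r + (-(1 + β)) • s = ((r.1*(1-α) + s.1*(-1-β), r.2*(1-α) + s.2*(-1-β)) : ℝ×ℝ) := by
      apply Prod.ext <;> simp [Prod.fst_add, Prod.snd_add, Prod.smul_fst, Prod.smul_snd] <;> ring
    rw [eq1, eq2, eq3, eq4]
  have hdet : r.1*s.2 - s.1*r.2 = cross2 r s := by unfold cross2; ring
  have htrans : ∀ g : ℝ×ℝ → ℝ, (∫ x in quadK α β r s, g x)
      = cross2 r s * ∫ t in K0, g (r.1*t.1 + s.1*t.2, r.2*t.1 + s.2*t.2) := by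
    intro g
    rw [himg]
    have h := img_lemma r.1 s.1 r.2 s.2 0 0 (by rw [hdet]; exact hc0) hK0m g
    simp_rw [zero_add] at h
    rw [hdet, abs_of_pos hc] at h
    exact h
  -- basic integrals
  have hxi_int : (∫ y in quadK α β r s, xiCoord r s y) = cross2 r s * (4*β/3) := by
    rw [htrans (xiCoord r s)]
    rw [show (fun t : ℝ×ℝ => xiCoord r s ((r.1*t.1 + s.1*t.2, r.2*t.1 + s.2*t.2) : ℝ×ℝ))
        = (fun p : ℝ×ℝ => 0 + 1*p.1 + 0*p.2 + 0*p.1^2 + 0*p.1*p.2 + 0*p.2^2) from funext fun t => by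
      unfold xiCoord cross2; dsimp only; rw [eq_comm, eq_div_iff hc0']; ring]
    rw [hK0def, master α β h1 h2 h3 h4 0 1 0 0 0 0]
    ring
  have heta_int : (∫ y in quadK α β r s, etaCoord r s y) = cross2 r s * (4*α/3) := by
    rw [htrans (etaCoord r s)]
    rw [show (fun t : ℝ×ℝ => etaCoord r s ((r.1*t.1 + s.1*t.2, r.2*t.1 + s.2*t.2) : ℝ×ℝ))
        = (fun p : ℝ×ℝ => 0 + 0*p.1 + 1*p.2 + 0*p.1^2 + 0*p.1*p.2 + 0*p.2^2) from funext fun t => by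
      unfold etaCoord cross2; dsimp only; rw [eq_comm, eq_div_iff hc0']; ring]
    rw [hK0def, master α β h1 h2 h3 h4 0 0 1 0 0 0]
    ring
  have hvol : (volume (quadK α β r s)).toReal = 4 * cross2 r s := by
    have hone : (∫ _x in quadK α β r s, (1:ℝ)) = (volume (quadK α β r s)).toReal := by
      rw [MeasureTheory.setIntegral_const]; simp [measureReal_def]
    rw [← hone, htrans (fun _ => (1:ℝ))]
    rw [show (fun _t : ℝ×ℝ => (1:ℝ))
        = (fun p : ℝ×ℝ => 1 + 0*p.1 + 0*p.2 + 0*p.1^2 + 0*p.1*p.2 + 0*p.2^2) from funext fun t => by ring]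
    rw [hK0def, master α β h1 h2 h3 h4 1 0 0 0 0 0]
    ring
  have hm1 : (∫ y in quadK α β r s, xiCoord r s y) / (volume (quadK α β r s)).toReal = β/3 := by
    rw [hxi_int, hvol]; field_simp
  have hm2 : (∫ y in quadK α β r s, etaCoord r s y) / (volume (quadK α β r s)).toReal = α/3 := by
    rw [heta_int, hvol]; field_simp
  refine ⟨?_, ?_, ?_⟩
  · simp_rw [hXi, hm1]
    rw [htrans (fun x => (xiCoord r s x - β/3)^2)]
    rw [show (fun t : ℝ×ℝ => (xiCoord r s ((r.1*t.1 + s.1*t.2, r.2*t.1 + s.2*t.2) : ℝ×ℝ) - β/3)^2)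
        = (fun p : ℝ×ℝ => β^2/9 + (-(2*β)/3)*p.1 + 0*p.2 + 1*p.1^2 + 0*p.1*p.2 + 0*p.2^2) from funext fun t => by
      unfold xiCoord cross2; dsimp only
      rw [show ((r.1*t.1 + s.1*t.2)*s.2 - (r.2*t.1 + s.2*t.2)*s.1) / (r.1*s.2 - r.2*s.1) = t.1 from by
        rw [eq_comm, eq_div_iff hc0']; ring]
      ring]
    rw [hK0def, master α β h1 h2 h3 h4 (β^2/9) (-(2*β)/3) 0 1 0 0]
    ring
  · simp_rw [hXi, hEta, hm1, hm2]
    rw [htrans (fun x => (xiCoord r s x - β/3) * (etaCoord r s x - α/3))]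
    rw [show (fun t : ℝ×ℝ => (xiCoord r s ((r.1*t.1 + s.1*t.2, r.2*t.1 + s.2*t.2) : ℝ×ℝ) - β/3)
          * (etaCoord r s ((r.1*t.1 + s.1*t.2, r.2*t.1 + s.2*t.2) : ℝ×ℝ) - α/3))
        = (fun p : ℝ×ℝ => α*β/9 + (-α/3)*p.1 + (-β/3)*p.2 + 0*p.1^2 + 1*p.1*p.2 + 0*p.2^2) from funext fun t => by
      unfold xiCoord etaCoord cross2; dsimp only
      rw [show ((r.1*t.1 + s.1*t.2)*s.2 - (r.2*t.1 + s.2*t.2)*s.1) / (r.1*s.2 - r.2*s.1) = t.1 from by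
        rw [eq_comm, eq_div_iff hc0']; ring]
      rw [show (r.1*(r.2*t.1 + s.2*t.2) - r.2*(r.1*t.1 + s.1*t.2)) / (r.1*s.2 - r.2*s.1) = t.2 from by
        rw [eq_comm, eq_div_iff hc0']; ring]
      ring]
    rw [hK0def, master α β h1 h2 h3 h4 (α*β/9) (-α/3) (-β/3) 0 1 0]
    ring
  · simp_rw [hEta, hm2]
    rw [htrans (fun x => (etaCoord r s x - α/3)^2)]
    rw [show (fun t : ℝ×ℝ => (etaCoord r s ((r.1*t.1 + s.1*t.2, r.2*t.1 + s.2*t.2) : ℝ×ℝ) - α/3)^2)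
        = (fun p : ℝ×ℝ => α^2/9 + 0*p.1 + (-(2*α)/3)*p.2 + 0*p.1^2 + 0*p.1*p.2 + 1*p.2^2) from funext fun t => by
      unfold etaCoord cross2; dsimp only
      rw [show (r.1*(r.2*t.1 + s.2*t.2) - r.2*(r.1*t.1 + s.1*t.2)) / (r.1*s.2 - r.2*s.1) = t.2 from by
        rw [eq_comm, eq_div_iff hc0']; ring]
      ring]
    rw [hK0def, master α β h1 h2 h3 h4 (α^2/9) 0 (-(2*α)/3) 0 0 1]
    ring
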